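/- Fix an integer k ≥ 1, let d := ⌊log₂(k+1)⌋, and define b(k,n) := 1 + #{i : 1 ≤ i ≤ p(k,n) and split(n,i)} for n ≥ k (the number of belt-node ancestors of the k-th most recently appended leaf in the MMB structure on n leaves). Then the sequence N ↦ (1/N)·Σ_{n=k}^{k+N−1} b(k,n) converges, and its limit equals (3/8)·d + (k+1)/2^{d+1} + 1/8 if 2^d ≤ k+1 ≤ (3/2)·2^d, and equals (3/8)·d + (k+1)/2^{d+2} + 1/2 if (3/2)·2^d < k+1 < 2^{d+1}. -/

import Mathlib

open Filter Finset

/-- The `i`-th binary digit of `m`. -/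
def bit (i m : ℕ) : ℕ := m / 2 ^ i % 2

/-- Position (from 0 at the right) of the mountain of the U-MMB structure on `n` leaves
containing the `k`-th most recently appended leaf. -/
noncomputable def pos (k n : ℕ) : ℕ :=
  sInf {i : ℕ | k ≤ 2 ^ (i + 1) - 1 + (n + 1) % 2 ^ (i + 1)}

/-- `Split n i` holds iff there is a range split between the mountains at positions `i`
and `i−1` of the MMB structure on `n` leaves. -/
def Split (n i : ℕ) : Prop :=
  bit i (n + 1) = 1 ∧ (bit (i + 1) (n + 1) = 0 ∨ bit (i - 1) (n + 1) = 0)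

instance (n i : ℕ) : Decidable (Split n i) := by unfold Split; infer_instance

/-- The number of belt-node ancestors of the `k`-th most recently appended leaf in the
MMB structure on `n` leaves. -/
noncomputable def belt (k n : ℕ) : ℕ :=
  1 + ((Finset.Icc 1 (pos k n)).filter (fun i => Split n i)).card



lemma bit_eq (i m : ℕ) : bit i m = m % 2 ^ (i+1) / 2 ^ i := by
  rw [bit, pow_succ, Nat.mod_mul_right_div_self]

lemma bit_period {i P : ℕ} (h : 2^(i+1) ∣ P) (m : ℕ) : bit i (m + P) = bit i m := by
  obtain ⟨t, rfl⟩ := h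
  rw [bit_eq, bit_eq, Nat.add_mul_mod_self_left]

lemma mod_pow_le (m i j : ℕ) (h : i ≤ j) : m % 2^i ≤ m % 2^j := by
  conv_lhs => rw [← Nat.mod_mod_of_dvd m (pow_dvd_pow 2 h)]
  exact Nat.mod_le _ _

lemma sum_shift {M : Type*} [AddCancelCommMonoid M] (f : ℕ → M) (T : ℕ)
    (hf : ∀ n, f (n + T) = f n) (a : ℕ) :
    ∑ j ∈ range T, f (a + j) = ∑ j ∈ range T, f j := by
  induction a with
  | zero => simp
  | succ b ih =>
    rw [← ih]
    have h1 := Finset.sum_range_add (fun j => f (b + j)) 1 T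
    have h2 := Finset.sum_range_succ (fun j => f (b + j)) T
    rw [add_comm 1 T] at h1
    rw [h2] at h1
    simp only [Finset.sum_range_one, Nat.add_zero] at h1
    have h3 : f (b + T) = f b := hf b
    rw [h3] at h1
    have h4 : ∑ x ∈ range T, f (b + (1 + x)) = ∑ j ∈ range T, f (b + j) := by
      have := h1.symm
      rw [add_comm (f b)] at this
      exact add_right_cancel this
    rw [← h4]
    congr 1
    ext x
    congr 1
    omega

lemma periodic_mul {f : ℕ → ℕ} {P : ℕ} (hf : ∀ n, f (n + P) = f n) (q n : ℕ) :
    f (n + P * q) = f n := by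
  induction q with
  | zero => simp
  | succ m ih =>
    rw [Nat.mul_succ, ← Nat.add_assoc]
    exact (hf _).trans ih

lemma sum_range_mul {M : Type*} [AddCommMonoid M] (g : ℕ → M) (c b : ℕ) :
    ∑ m ∈ range (c * b), g m = ∑ q ∈ range b, ∑ r ∈ range c, g (c * q + r) := by
  induction b with
  | zero => simp
  | succ b ih =>
    rw [Nat.mul_succ, Finset.sum_range_add, ih, Finset.sum_range_succ]

lemma cesaro (f : ℕ → ℝ) (T : ℕ) (hT : 0 < T) (hf : ∀ n, f (n + T) = f n) (a : ℕ) :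
    Tendsto (fun N : ℕ => (N : ℝ)⁻¹ * ∑ n ∈ Finset.Ico a (a + N), f n) atTop
      (nhds ((∑ n ∈ range T, f n) / T)) := by
  have hsum : ∀ N : ℕ, ∑ n ∈ Finset.Ico a (a + N), f n = ∑ j ∈ range N, f (a + j) := by
    intro N
    rw [Finset.sum_Ico_eq_sum_range, Nat.add_sub_cancel_left]
  have hg : ∀ n, f (a + (n + T)) = f (a + n) := by
    intro n
    rw [← Nat.add_assoc]
    exact hf _
  set P : ℝ := ∑ j ∈ range T, f j with hP_def
  have hgP : ∑ j ∈ range T, f (a + j) = P := sum_shift f T hf a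
  have block : ∀ m, ∑ j ∈ range (m + T), f (a + j) = ∑ j ∈ range m, f (a + j) + P := by
    intro m
    rw [Finset.sum_range_add, ← hgP]
    congr 1
    calc ∑ x ∈ range T, f (a + (m + x)) = ∑ x ∈ range T, f (a + m + x) := by
          refine Finset.sum_congr rfl fun x _ => ?_
          rw [Nat.add_assoc]
      _ = ∑ x ∈ range T, f x := sum_shift f T hf (a + m)
      _ = ∑ x ∈ range T, f (a + x) := (sum_shift f T hf a).symm
  have sums : ∀ q r, ∑ j ∈ range (T * q + r), f (a + j)
      = (q : ℝ) * P + ∑ j ∈ range r, f (a + j) := by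
    intro q r
    induction q with
    | zero => simp
    | succ m ih =>
      have he : T * (m + 1) + r = (T * m + r) + T := by ring
      rw [he, block, ih]
      push_cast
      ring
  have key : ∀ N : ℕ, ∑ j ∈ range N, f (a + j)
      = ((N / T : ℕ) : ℝ) * P + ∑ j ∈ range (N % T), f (a + j) := by
    intro N
    conv_lhs => rw [← Nat.div_add_mod N T]
    exact sums _ _
  set C : ℝ := ∑ j ∈ range T, |f (a + j)| with hC_def
  have hC0 : 0 ≤ C := Finset.sum_nonneg fun _ _ => abs_nonneg _
  have hT0 : (T : ℝ) ≠ 0 := by positivity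
  have hbound : ∀ᶠ N : ℕ in atTop,
      ‖(N : ℝ)⁻¹ * ∑ n ∈ Finset.Ico a (a + N), f n - P / T‖ ≤ (C + |P|) / N := by
    refine eventually_atTop.mpr ⟨1, fun N hN => ?_⟩
    have hN0 : (N : ℝ) ≠ 0 := by
      simp only [ne_eq, Nat.cast_eq_zero]
      omega
    have hNpos : (0:ℝ) < N := by
      have : 0 < N := hN
      exact_mod_cast this
    rw [hsum, key]
    have hNr : (N : ℝ) = (T : ℝ) * ((N / T : ℕ) : ℝ) + ((N % T : ℕ) : ℝ) := by
      exact_mod_cast (Nat.div_add_mod N T).symm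
    have hrT : ((N % T : ℕ) : ℝ) ≤ T := by
      have : N % T < T := Nat.mod_lt _ hT
      exact_mod_cast this.le
    have hEC : |∑ j ∈ range (N % T), f (a + j)| ≤ C := by
      calc |∑ j ∈ range (N % T), f (a + j)| ≤ ∑ j ∈ range (N % T), |f (a + j)| :=
            Finset.abs_sum_le_sum_abs _ _
        _ ≤ C := Finset.sum_le_sum_of_subset_of_nonneg
            (Finset.range_subset_range.mpr (Nat.mod_lt _ hT).le)
            (fun _ _ _ => abs_nonneg _)
    set E : ℝ := ∑ j ∈ range (N % T), f (a + j) with hE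
    have hid : (N : ℝ)⁻¹ * (((N / T : ℕ) : ℝ) * P + E) - P / T
        = (N : ℝ)⁻¹ * (E - ((N % T : ℕ) : ℝ) * P / T) := by
      have hN0' : (T:ℝ) * ((N / T : ℕ) : ℝ) + ((N % T : ℕ) : ℝ) ≠ 0 := by
        rw [← hNr]; exact hN0
      rw [hNr]
      field_simp
      ring
    rw [hid, Real.norm_eq_abs, abs_mul, abs_inv, abs_of_pos hNpos]
    have hdiv : (C + |P|) / (N:ℝ) = (N:ℝ)⁻¹ * (C + |P|) := div_eq_inv_mul _ _
    rw [hdiv]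
    refine mul_le_mul_of_nonneg_left ?_ (inv_nonneg.mpr hNpos.le)
    calc |E - ((N % T : ℕ) : ℝ) * P / T| ≤ |E| + |((N % T : ℕ) : ℝ) * P / T| := abs_sub _ _
      _ ≤ C + |P| := by
          refine add_le_add hEC ?_
          rw [abs_div, abs_mul, abs_of_nonneg (by positivity : (0:ℝ) ≤ ((N % T : ℕ) : ℝ)),
            abs_of_nonneg (by positivity : (0:ℝ) ≤ (T:ℝ))]
          rw [div_le_iff₀ (by positivity)]
          nlinarith [abs_nonneg P]
  have h0 : Tendsto (fun N : ℕ => (C + |P|) / N) atTop (nhds 0) :=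
    tendsto_const_div_atTop_nhds_zero_nat _
  exact tendsto_sub_nhds_zero_iff.mp (squeeze_zero_norm' hbound h0)

lemma le_pos_iff (k n i : ℕ) (hk : 1 ≤ k) :
    i ≤ pos k n ↔ 2^i + (n+1) % 2^i ≤ k := by
  constructor
  · intro h
    cases i with
    | zero =>
      simp only [pow_zero, Nat.mod_one]
      omega
    | succ j =>
      have hj : j ∉ {i : ℕ | k ≤ 2 ^ (i + 1) - 1 + (n + 1) % 2 ^ (i + 1)} :=
        Nat.notMem_of_lt_sInf (lt_of_lt_of_le (Nat.lt_succ_self j) h)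
      simp only [Set.mem_setOf_eq, not_le] at hj
      have h2 : 0 < 2^(j+1) := by positivity
      omega
  · intro h
    have hkmem : k ∈ {i : ℕ | k ≤ 2 ^ (i + 1) - 1 + (n + 1) % 2 ^ (i + 1)} := by
      simp only [Set.mem_setOf_eq]
      have h1 : k < 2^k := Nat.lt_two_pow_self
      have h2 : (2:ℕ)^k ≤ 2^(k+1) := Nat.pow_le_pow_right (by norm_num) (by omega)
      omega
    refine le_csInf ⟨k, hkmem⟩ fun j hj => ?_
    by_contra hc
    push_neg at hc
    have h1 : (2:ℕ)^(j+1) ≤ 2^i := Nat.pow_le_pow_right (by norm_num) (by omega)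
    have h2 : (n+1) % 2^(j+1) ≤ (n+1) % 2^i := mod_pow_le _ _ _ (by omega)
    simp only [Set.mem_setOf_eq] at hj
    have h3 : 0 < 2^(j+1) := by positivity
    omega

lemma pos_le {k D : ℕ} (h : k + 1 ≤ 2^(D+1)) (n : ℕ) : pos k n ≤ D := by
  refine Nat.sInf_le ?_
  simp only [Set.mem_setOf_eq]
  have h2 : 0 < 2^(D+1) := by positivity
  omega

lemma belt_eq (k n D : ℕ) (hk : 1 ≤ k) (hD : pos k n ≤ D) :
    belt k n = 1 + ∑ i ∈ Finset.Icc 1 D,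
      (if 2^i + (n+1) % 2^i ≤ k ∧ Split n i then 1 else 0) := by
  rw [belt]
  congr 1
  rw [Finset.card_filter]
  have h1 : ∀ i ∈ Finset.Icc 1 (pos k n),
      (if Split n i then (1:ℕ) else 0)
        = (if 2^i + (n+1) % 2^i ≤ k ∧ Split n i then (1:ℕ) else 0) := by
    intro i hi
    simp only [Finset.mem_Icc] at hi
    have hc := (le_pos_iff k n i hk).mp hi.2
    simp [hc]
  rw [Finset.sum_congr rfl h1]
  refine Finset.sum_subset (Finset.Icc_subset_Icc_right hD) ?_
  intro i hi hnot
  simp only [Finset.mem_Icc] at hi hnot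
  have hip : ¬ i ≤ pos k n := by omega
  have hcc : ¬ (2^i + (n+1) % 2^i ≤ k) := fun hcc => hip ((le_pos_iff k n i hk).mpr hcc)
  simp [hcc]

lemma belt_period (k D : ℕ) (hk : 1 ≤ k) (hkD : k + 1 ≤ 2^(D+1)) (n : ℕ) :
    belt k (n + 2^(D+2)) = belt k n := by
  rw [belt_eq k (n + 2^(D+2)) D hk (pos_le hkD _), belt_eq k n D hk (pos_le hkD _)]
  congr 1
  refine Finset.sum_congr rfl fun i hi => ?_
  simp only [Finset.mem_Icc] at hi
  have e1 : n + 2^(D+2) + 1 = (n+1) + 2^(D+2) := by ring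
  have hmod : ((n+1) + 2^(D+2)) % 2^i = (n+1) % 2^i := by
    obtain ⟨t, ht⟩ := pow_dvd_pow 2 (show i ≤ D+2 by omega)
    rw [ht, Nat.add_mul_mod_self_left]
  have hb : ∀ j, j + 1 ≤ D + 2 → bit j ((n+1) + 2^(D+2)) = bit j (n+1) := by
    intro j hj
    exact bit_period (pow_dvd_pow 2 hj) _
  have hsplit : Split (n + 2^(D+2)) i ↔ Split n i := by
    unfold Split
    rw [e1, hb i (by omega), hb (i+1) (by omega), hb (i-1) (by omega)]
  have c1 : (2^i + (n + 2^(D+2) + 1) % 2^i ≤ k) ↔ (2^i + (n+1) % 2^i ≤ k) := by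
    rw [e1, hmod]
  exact if_congr (and_congr c1 hsplit) rfl rfl

lemma count_le (N c k : ℕ) :
    ∑ lo ∈ range N, (if c + lo ≤ k then (1:ℕ) else 0) = min N (k+1-c) := by
  rw [← Finset.card_filter]
  have h : Finset.filter (fun lo => c + lo ≤ k) (range N) = range (min N (k+1-c)) := by
    ext x
    simp only [Finset.mem_filter, Finset.mem_range]
    omega
  rw [h, Finset.card_range]

lemma count_le2 (N M c k : ℕ) (h : M ≤ N) :
    ∑ lo ∈ range N, (if c + lo ≤ k ∧ lo < M then (1:ℕ) else 0) = min M (k+1-c) := by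
  rw [← Finset.card_filter]
  have h2 : Finset.filter (fun lo => c + lo ≤ k ∧ lo < M) (range N)
      = range (min M (k+1-c)) := by
    ext x
    simp only [Finset.mem_filter, Finset.mem_range]
    omega
  rw [h2, Finset.card_range]

lemma innerSumAux (k j : ℕ) :
    ∑ r ∈ range (2^(j+3)),
      (if 2^(j+1) + r % 2^(j+1) ≤ k ∧ bit (j+1) r = 1 ∧ (bit (j+2) r = 0 ∨ bit j r = 0)
        then (1:ℕ) else 0)
      = min (2^(j+1)) (k+1-2^(j+1)) + min (2^j) (k+1-2^(j+1)) := by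
  have hP : 0 < 2^(j+1) := by positivity
  have hPj : 0 < 2^j := by positivity
  have e : (2:ℕ)^(j+3) = 2^(j+1) * 4 := by ring
  rw [e, sum_range_mul]
  have h4 : ∀ G : ℕ → ℕ, ∑ q ∈ range 4, G q = G 0 + G 1 + G 2 + G 3 := by
    intro G
    show ∑ q ∈ range (3+1), G q = _
    rw [Finset.sum_range_succ]
    show (∑ q ∈ range (2+1), G q) + G 3 = _
    rw [Finset.sum_range_succ]
    show (∑ q ∈ range (1+1), G q) + G 2 + G 3 = _
    rw [Finset.sum_range_succ, Finset.sum_range_one]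
  rw [h4]
  have key : ∀ s lo, s < 4 → lo < 2^(j+1) →
      (2^(j+1) * s + lo) % 2^(j+1) = lo ∧ bit (j+1) (2^(j+1)*s+lo) = s % 2 ∧
        bit (j+2) (2^(j+1)*s+lo) = s/2 ∧ bit j (2^(j+1)*s+lo) = lo / 2^j := by
    intro s lo hs hlo
    have m1 : (2^(j+1) * s + lo) % 2^(j+1) = lo := by
      rw [Nat.mul_add_mod]
      exact Nat.mod_eq_of_lt hlo
    have div1 : (2^(j+1) * s + lo) / 2^(j+1) = s := by
      rw [Nat.mul_add_div hP, Nat.div_eq_of_lt hlo, Nat.add_zero]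
    refine ⟨m1, ?_, ?_, ?_⟩
    · rw [bit, div1]
    · have e2 : (2:ℕ)^(j+2) = 2^(j+1) * 2 := by ring
      rw [bit, e2, ← Nat.div_div_eq_div_mul, div1]
      exact Nat.mod_eq_of_lt (by omega)
    · rw [bit_eq, m1]
  have hG0 : ∑ lo ∈ range (2^(j+1)),
      (if 2^(j+1) + (2^(j+1) * 0 + lo) % 2^(j+1) ≤ k ∧ bit (j+1) (2^(j+1) * 0 + lo) = 1 ∧
        (bit (j+2) (2^(j+1) * 0 + lo) = 0 ∨ bit j (2^(j+1) * 0 + lo) = 0) then (1:ℕ) else 0) = 0 := by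
    refine Finset.sum_eq_zero fun lo hlo => ?_
    have K := key 0 lo (by norm_num) (Finset.mem_range.mp hlo)
    rw [if_neg]
    rintro ⟨-, hb1, -⟩
    rw [K.2.1] at hb1
    simp at hb1
  have hG2 : ∑ lo ∈ range (2^(j+1)),
      (if 2^(j+1) + (2^(j+1) * 2 + lo) % 2^(j+1) ≤ k ∧ bit (j+1) (2^(j+1) * 2 + lo) = 1 ∧
        (bit (j+2) (2^(j+1) * 2 + lo) = 0 ∨ bit j (2^(j+1) * 2 + lo) = 0) then (1:ℕ) else 0) = 0 := by
    refine Finset.sum_eq_zero fun lo hlo => ?_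
    have K := key 2 lo (by norm_num) (Finset.mem_range.mp hlo)
    rw [if_neg]
    rintro ⟨-, hb1, -⟩
    rw [K.2.1] at hb1
    simp at hb1
  have hG1 : ∑ lo ∈ range (2^(j+1)),
      (if 2^(j+1) + (2^(j+1) * 1 + lo) % 2^(j+1) ≤ k ∧ bit (j+1) (2^(j+1) * 1 + lo) = 1 ∧
        (bit (j+2) (2^(j+1) * 1 + lo) = 0 ∨ bit j (2^(j+1) * 1 + lo) = 0) then (1:ℕ) else 0)
      = min (2^(j+1)) (k+1-2^(j+1)) := by
    rw [← count_le (2^(j+1)) (2^(j+1)) k]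
    refine Finset.sum_congr rfl fun lo hlo => ?_
    have K := key 1 lo (by norm_num) (Finset.mem_range.mp hlo)
    refine if_congr ?_ rfl rfl
    rw [K.1, K.2.1, K.2.2.1]
    norm_num
  have hG3 : ∑ lo ∈ range (2^(j+1)),
      (if 2^(j+1) + (2^(j+1) * 3 + lo) % 2^(j+1) ≤ k ∧ bit (j+1) (2^(j+1) * 3 + lo) = 1 ∧
        (bit (j+2) (2^(j+1) * 3 + lo) = 0 ∨ bit j (2^(j+1) * 3 + lo) = 0) then (1:ℕ) else 0)
      = min (2^j) (k+1-2^(j+1)) := by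
    rw [← count_le2 (2^(j+1)) (2^j) (2^(j+1)) k (Nat.pow_le_pow_right (by norm_num) (by omega))]
    refine Finset.sum_congr rfl fun lo hlo => ?_
    have hlo' := Finset.mem_range.mp hlo
    have K := key 3 lo (by norm_num) hlo'
    refine if_congr ?_ rfl rfl
    rw [K.1, K.2.1, K.2.2.1, K.2.2.2]
    have hdiv : lo / 2^j = 0 ↔ lo < 2^j := by rw [Nat.div_eq_zero_iff]; omega
    norm_num [hdiv]
  rw [hG0, hG1, hG2, hG3]
  omega

lemma period_sum (k d : ℕ) (hk : 1 ≤ k) (hk2 : k + 1 ≤ 2^(d+1)) :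
    ∑ n ∈ range (2^(d+2)), belt k n
      = 2^(d+2) + ∑ i ∈ Finset.Icc 1 d, 2^(d-i) *
          (min (2^i) (k+1-2^i) + min (2^(i-1)) (k+1-2^i)) := by
  have hb : ∀ n, belt k n = 1 + ∑ i ∈ Finset.Icc 1 d,
      (if 2^i + (n+1) % 2^i ≤ k ∧ Split n i then (1:ℕ) else 0) :=
    fun n => belt_eq k n d hk (pos_le hk2 n)
  calc ∑ n ∈ range (2^(d+2)), belt k n
      = ∑ n ∈ range (2^(d+2)), (1 + ∑ i ∈ Finset.Icc 1 d,
          (if 2^i + (n+1) % 2^i ≤ k ∧ Split n i then (1:ℕ) else 0)) :=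
        Finset.sum_congr rfl fun n _ => hb n
    _ = 2^(d+2) + ∑ i ∈ Finset.Icc 1 d, ∑ n ∈ range (2^(d+2)),
          (if 2^i + (n+1) % 2^i ≤ k ∧ Split n i then (1:ℕ) else 0) := by
        rw [Finset.sum_add_distrib, Finset.sum_const, Finset.card_range, smul_eq_mul,
          mul_one, Finset.sum_comm]
    _ = 2^(d+2) + ∑ i ∈ Finset.Icc 1 d, 2^(d-i) *
          (min (2^i) (k+1-2^i) + min (2^(i-1)) (k+1-2^i)) := by
        congr 1
        refine Finset.sum_congr rfl fun i hi => ?_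
        simp only [Finset.mem_Icc] at hi
        obtain ⟨j, rfl⟩ : ∃ j, i = j + 1 := ⟨i - 1, by omega⟩
        set F : ℕ → ℕ := fun m =>
          if 2^(j+1) + m % 2^(j+1) ≤ k ∧ bit (j+1) m = 1 ∧
            (bit (j+2) m = 0 ∨ bit j m = 0) then (1:ℕ) else 0 with hF
        have hFper : ∀ m, F (m + 2^(j+3)) = F m := by
          intro m
          simp only [hF]
          refine if_congr ?_ rfl rfl
          have hmod : (m + 2^(j+3)) % 2^(j+1) = m % 2^(j+1) := by
            obtain ⟨t, ht⟩ := pow_dvd_pow (2:ℕ) (show j+1 ≤ j+3 by omega)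
            rw [ht, Nat.add_mul_mod_self_left]
          have hb1 := bit_period (i := j+1)
            (show (2:ℕ)^(j+1+1) ∣ 2^(j+3) from pow_dvd_pow 2 (by omega)) m
          have hb2 := bit_period (i := j+2)
            (show (2:ℕ)^(j+2+1) ∣ 2^(j+3) from pow_dvd_pow 2 (by omega)) m
          have hb3 := bit_period (i := j)
            (show (2:ℕ)^(j+1) ∣ 2^(j+3) from pow_dvd_pow 2 (by omega)) m
          rw [hmod, hb1, hb2, hb3]
        have hTper : ∀ m, F (m + 2^(d+2)) = F m := by
          intro m
          have he : (2:ℕ)^(d+2) = 2^(j+3) * 2^(d+2-(j+3)) := by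
            rw [← pow_add]
            have : j+3 + (d+2-(j+3)) = d+2 := by omega
            rw [this]
          rw [he]
          exact periodic_mul hFper _ m
        calc ∑ n ∈ range (2^(d+2)),
              (if 2^(j+1) + (n+1) % 2^(j+1) ≤ k ∧ Split n (j+1) then (1:ℕ) else 0)
            = ∑ n ∈ range (2^(d+2)), F (n + 1) := by
              refine Finset.sum_congr rfl fun n _ => ?_
              simp only [hF, Split]
              exact if_congr Iff.rfl rfl rfl
          _ = ∑ n ∈ range (2^(d+2)), F (1 + n) := by
              refine Finset.sum_congr rfl fun n _ => ?_
              rw [Nat.add_comm]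
          _ = ∑ n ∈ range (2^(d+2)), F n := sum_shift F (2^(d+2)) hTper 1
          _ = ∑ q ∈ range (2^(d+2-(j+3))), ∑ r ∈ range (2^(j+3)), F (2^(j+3) * q + r) := by
              rw [← sum_range_mul]
              have : (2:ℕ)^(j+3) * 2^(d+2-(j+3)) = 2^(d+2) := by
                rw [← pow_add]
                have h9 : j+3 + (d+2-(j+3)) = d+2 := by omega
                rw [h9]
              rw [this]
          _ = ∑ q ∈ range (2^(d+2-(j+3))), ∑ r ∈ range (2^(j+3)), F r := by
              refine Finset.sum_congr rfl fun q _ => Finset.sum_congr rfl fun r _ => ?_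
              rw [Nat.add_comm]
              exact periodic_mul hFper q r
          _ = 2^(d-(j+1)) * ∑ r ∈ range (2^(j+3)), F r := by
              rw [Finset.sum_const, Finset.card_range, smul_eq_mul]
              have : d+2-(j+3) = d-(j+1) := by omega
              rw [this]
          _ = 2^(d-(j+1)) * (min (2^(j+1)) (k+1-2^(j+1)) + min (2^((j+1)-1)) (k+1-2^(j+1))) := by
              rw [innerSumAux]
              rfl

/-- The amortized number of belt-node ancestors of the `k`-th most recent leaf, with
`d = ⌊log₂ (k+1)⌋`, equals `(3/8)·d + (k+1)/2^(d+1) + 1/8` when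
`2^d ≤ k+1 ≤ (3/2)·2^d`, and `(3/8)·d + (k+1)/2^(d+2) + 1/2` when
`(3/2)·2^d < k+1 < 2^(d+1)`. -/
theorem mmb_amortized_belt_nodes (k : ℕ) (hk : 1 ≤ k) (d : ℕ)
    (hd : d = Nat.log 2 (k + 1)) :
    (2 ^ d ≤ k + 1 → 2 * (k + 1) ≤ 3 * 2 ^ d →
      Tendsto
        (fun N : ℕ => (N : ℝ)⁻¹ * ∑ n ∈ Finset.Ico k (k + N), (belt k n : ℝ))
        atTop
        (nhds (3 / 8 * (d : ℝ) + ((k : ℝ) + 1) / 2 ^ (d + 1) + 1 / 8))) ∧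
    (3 * 2 ^ d < 2 * (k + 1) → k + 1 < 2 ^ (d + 1) →
      Tendsto
        (fun N : ℕ => (N : ℝ)⁻¹ * ∑ n ∈ Finset.Ico k (k + N), (belt k n : ℝ))
        atTop
        (nhds (3 / 8 * (d : ℝ) + ((k : ℝ) + 1) / 2 ^ (d + 2) + 1 / 2))) := by
  have hk1 : (2:ℕ)^d ≤ k + 1 := by rw [hd]; exact Nat.pow_log_le_self 2 (by omega)
  have hk2 : k + 1 < 2^(d+1) := by
    rw [hd]; exact Nat.lt_pow_succ_log_self (by norm_num) (k+1)
  have h21 : (2:ℕ)^1 ≤ k + 1 := by simpa using Nat.succ_le_succ hk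
  have hd1 : 1 ≤ d := by
    rw [hd]; exact (Nat.le_log_iff_pow_le (b := 2) (by norm_num) (by omega)).mpr h21
  obtain ⟨e, rfl⟩ : ∃ e, d = e + 1 := ⟨d - 1, by omega⟩
  have hT : (0:ℕ) < 2^(e+3) := by positivity
  have hfper : ∀ n, ((belt k (n + 2^(e+3)) : ℕ) : ℝ) = ((belt k n : ℕ) : ℝ) := by
    intro n
    rw [belt_period k (e+1) hk (le_of_lt hk2) n]
  have hces := cesaro (fun n => (belt k n : ℝ)) (2^(e+3)) hT hfper k
  have hS := period_sum k (e+1) hk (le_of_lt hk2)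
  have hterm : ∀ i ∈ Finset.Icc 1 e,
      2^(e+1-i) * (min (2^i) (k+1-2^i) + min (2^(i-1)) (k+1-2^i)) = 3 * 2^e := by
    intro i hi
    simp only [Finset.mem_Icc] at hi
    obtain ⟨i', rfl⟩ : ∃ i', i = i' + 1 := ⟨i - 1, by omega⟩
    simp only [Nat.add_sub_cancel]
    have h1 : (2:ℕ)^(i'+1+1) ≤ 2^(e+1) := Nat.pow_le_pow_right (by norm_num) (by omega)
    have h2 : (2:ℕ)^(i'+1+1) = 2^(i'+1) + 2^(i'+1) := by ring
    have h3 : (2:ℕ)^(i'+1) = 2^i' + 2^i' := by ring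
    have hmin1 : min (2^(i'+1)) (k+1-2^(i'+1)) = 2^(i'+1) := min_eq_left (by omega)
    have hmin2 : min (2^i') (k+1-2^(i'+1)) = 2^i' := min_eq_left (by omega)
    rw [hmin1, hmin2, Nat.mul_add, ← pow_add, ← pow_add,
      show e+1-(i'+1)+(i'+1) = e+1 by omega, show e+1-(i'+1)+i' = e by omega, pow_succ]
    ring
  have hIcc : ∑ i ∈ Finset.Icc 1 (e+1),
      2^(e+1-i) * (min (2^i) (k+1-2^i) + min (2^(i-1)) (k+1-2^i))
      = e * (3 * 2^e) + ((k+1-2^(e+1)) + min (2^e) (k+1-2^(e+1))) := by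
    rw [Finset.sum_Icc_succ_top (by omega), Finset.sum_congr rfl hterm,
      Finset.sum_const, Nat.card_Icc, smul_eq_mul]
    simp only [Nat.add_sub_cancel, Nat.sub_self, pow_zero, one_mul]
    have h4 : (2:ℕ)^(e+2) = 2^(e+1) + 2^(e+1) := by ring
    have hminTop : min (2^(e+1)) (k+1-2^(e+1)) = k+1-2^(e+1) := min_eq_right (by omega)
    rw [hminTop]
  obtain ⟨m, hm⟩ : ∃ m, k + 1 = 2^(e+1) + m := ⟨k+1-2^(e+1), by omega⟩
  have hsub : k+1-2^(e+1) = m := by omega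
  have hmR : ((k:ℝ) + 1) = 2^(e+1) + (m:ℝ) := by
    have h5 : ((k+1 : ℕ) : ℝ) = ((2^(e+1) + m : ℕ) : ℝ) := by rw [hm]
    push_cast at h5
    linarith
  have he1 : (2:ℕ)^(e+1) = 2^e + 2^e := by ring
  have he2 : (2:ℕ)^(e+2) = 2^(e+1) + 2^(e+1) := by ring
  constructor
  · intro _ hB
    have hmin : min (2^e) (k+1-2^(e+1)) = k+1-2^(e+1) := min_eq_right (by omega)
    have hSval : ∑ n ∈ range (2^(e+3)), belt k n
        = 2^(e+3) + (e * (3*2^e) + (m + m)) := by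
      rw [hS, hIcc, hmin, hsub]
    have hlim : (∑ n ∈ range (2^(e+3)), ((belt k n : ℕ) : ℝ)) / ((2^(e+3) : ℕ) : ℝ)
        = 3/8*((e+1 : ℕ) : ℝ) + ((k:ℝ)+1)/2^(e+1+1) + 1/8 := by
      rw [← Nat.cast_sum, hSval, hmR]
      push_cast
      have hne2 : ((2:ℝ))^(e+3) ≠ 0 := by positivity
      have hne1 : ((2:ℝ))^(e+1+1) ≠ 0 := by positivity
      field_simp
      ring
    rw [hlim] at hces
    exact hces
  · intro hA _
    have hmin : min (2^e) (k+1-2^(e+1)) = 2^e := min_eq_left (by omega)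
    have hSval : ∑ n ∈ range (2^(e+3)), belt k n
        = 2^(e+3) + (e * (3*2^e) + (m + 2^e)) := by
      rw [hS, hIcc, hmin, hsub]
    have hlim : (∑ n ∈ range (2^(e+3)), ((belt k n : ℕ) : ℝ)) / ((2^(e+3) : ℕ) : ℝ)
        = 3/8*((e+1 : ℕ) : ℝ) + ((k:ℝ)+1)/2^(e+1+2) + 1/2 := by
      rw [← Nat.cast_sum, hSval, hmR]
      push_cast
      have hne2 : ((2:ℝ))^(e+3) ≠ 0 := by positivity
      have hne1 : ((2:ℝ))^(e+1+2) ≠ 0 := by positivity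
      field_simp
      ring
    rw [hlim] at hces
    exact hces
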